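/- In a finite discounted MDP with discount γ ∈ [0,1), for any two policies π and π', the L¹ distance between their normalized discounted state-visitation distributions satisfies ‖d_{π'} − d_π‖₁ ≤ (2γ/(1−γ)) · E_{s ∼ d_π}[D_TV(π'(·|s), π(·|s))]. -/

import Mathlib

open scoped BigOperators

section MDP

variable {S A : Type*} [Fintype S] [Fintype A]

/-- `P` is a transition kernel: each `P s a` is a probability distribution on states. -/
def IsKernel (P : S → A → S → ℝ) : Prop :=
  (∀ s a s', 0 ≤ P s a s') ∧ ∀ s a, ∑ s', P s a s' = 1

/-- `π` is a policy: each `π s` is a probability distribution on actions. -/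
def IsPolicy (π : S → A → ℝ) : Prop :=
  (∀ s a, 0 ≤ π s a) ∧ ∀ s, ∑ a, π s a = 1

/-- `ρ` is a probability distribution on states. -/
def IsDist (ρ : S → ℝ) : Prop := (∀ s, 0 ≤ ρ s) ∧ ∑ s, ρ s = 1

/-- Total variation distance between finitely supported distributions. -/
noncomputable def dtv {X : Type*} [Fintype X] (p q : X → ℝ) : ℝ := (1 / 2) * ∑ x, |p x - q x|

/-- One-step state transition probability induced by policy `π`. -/
def stepKernel (P : S → A → S → ℝ) (π : S → A → ℝ) (s s' : S) : ℝ :=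
  ∑ a, π s a * P s a s'

/-- Distribution of the state after `t` steps starting from `s`, following `π`. -/
noncomputable def visit [DecidableEq S] (P : S → A → S → ℝ) (π : S → A → ℝ) : ℕ → S → S → ℝ
  | 0, s, s' => if s' = s then 1 else 0
  | (t + 1), s, s' => ∑ s'', visit P π t s s'' * stepKernel P π s'' s'

/-- Expected one-step reward of policy `π` at state `s`. -/
def rewardOf (r : S → A → ℝ) (π : S → A → ℝ) (s : S) : ℝ := ∑ a, π s a * r s a

/-- State value function `V_π`. -/
noncomputable def Vval [DecidableEq S] (P : S → A → S → ℝ) (r : S → A → ℝ) (γ : ℝ) (π : S → A → ℝ)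
    (s : S) : ℝ :=
  ∑' t : ℕ, γ ^ t * ∑ s', visit P π t s s' * rewardOf r π s'

/-- Action value function `Q_π`. -/
noncomputable def Qval [DecidableEq S] (P : S → A → S → ℝ) (r : S → A → ℝ) (γ : ℝ) (π : S → A → ℝ)
    (s : S) (a : A) : ℝ :=
  r s a + γ * ∑ s', P s a s' * Vval P r γ π s'

/-- Advantage function `A_π = Q_π - V_π`. -/
noncomputable def Adv [DecidableEq S] (P : S → A → S → ℝ) (r : S → A → ℝ) (γ : ℝ) (π : S → A → ℝ)
    (s : S) (a : A) : ℝ :=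
  Qval P r γ π s a - Vval P r γ π s

/-- Expected discounted return `J(π)` from initial distribution `ρ₀`. -/
noncomputable def Jval [DecidableEq S] (P : S → A → S → ℝ) (r : S → A → ℝ) (γ : ℝ) (ρ₀ : S → ℝ)
    (π : S → A → ℝ) : ℝ :=
  ∑ s, ρ₀ s * Vval P r γ π s

/-- Normalized discounted state-visitation distribution `d_π`. -/
noncomputable def dvisit [DecidableEq S] (P : S → A → S → ℝ) (γ : ℝ) (ρ₀ : S → ℝ) (π : S → A → ℝ)
    (s : S) : ℝ :=
  (1 - γ) * ∑' t : ℕ, γ ^ t * ∑ s₀, ρ₀ s₀ * visit P π t s₀ s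

end MDP

section Helper

variable {S A : Type*} [Fintype S] [Fintype A]

lemma stepKernel_nonneg' (P : S → A → S → ℝ) (π : S → A → ℝ) (hP : IsKernel P) (hπ : IsPolicy π)
    (s s' : S) : 0 ≤ stepKernel P π s s' :=
  Finset.sum_nonneg fun a _ => mul_nonneg (hπ.1 s a) (hP.1 s a s')

lemma stepKernel_sum' (P : S → A → S → ℝ) (π : S → A → ℝ) (hP : IsKernel P) (hπ : IsPolicy π)
    (s : S) : ∑ s', stepKernel P π s s' = 1 := by
  unfold stepKernel
  rw [Finset.sum_comm]
  simp only [← Finset.mul_sum, hP.2, mul_one]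
  exact hπ.2 s

variable [DecidableEq S]

lemma visit_nonneg' (P : S → A → S → ℝ) (π : S → A → ℝ) (hP : IsKernel P) (hπ : IsPolicy π) :
    ∀ (t : ℕ) (s s' : S), 0 ≤ visit P π t s s' := by
  intro t
  induction t with
  | zero => intro s s'; unfold visit; split <;> norm_num
  | succ t ih =>
    intro s s'
    exact Finset.sum_nonneg fun s'' _ =>
      mul_nonneg (ih s s'') (stepKernel_nonneg' P π hP hπ s'' s')

lemma visit_sum' (P : S → A → S → ℝ) (π : S → A → ℝ) (hP : IsKernel P) (hπ : IsPolicy π) :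
    ∀ (t : ℕ) (s : S), ∑ s', visit P π t s s' = 1 := by
  intro t
  induction t with
  | zero => intro s; simp [visit]
  | succ t ih =>
    intro s
    show ∑ s', ∑ s'', visit P π t s s'' * stepKernel P π s'' s' = 1
    rw [Finset.sum_comm]
    simp only [← Finset.mul_sum, stepKernel_sum' P π hP hπ, mul_one]
    exact ih s

lemma visit_le_one' (P : S → A → S → ℝ) (π : S → A → ℝ) (hP : IsKernel P) (hπ : IsPolicy π)
    (t : ℕ) (s s' : S) : visit P π t s s' ≤ 1 := by
  rw [← visit_sum' P π hP hπ t s]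
  exact Finset.single_le_sum (fun x _ => visit_nonneg' P π hP hπ t s x) (Finset.mem_univ s')

/-- Unnormalized discounted visitation sum. -/
noncomputable def dsum (P : S → A → S → ℝ) (γ : ℝ) (ρ₀ : S → ℝ) (π : S → A → ℝ) (s : S) : ℝ :=
  ∑' t : ℕ, γ ^ t * ∑ s₀, ρ₀ s₀ * visit P π t s₀ s

lemma dvisit_eq_dsum (P : S → A → S → ℝ) (γ : ℝ) (ρ₀ : S → ℝ) (π : S → A → ℝ) (s : S) :
    dvisit P γ ρ₀ π s = (1 - γ) * dsum P γ ρ₀ π s := rfl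

lemma mu_nonneg' (P : S → A → S → ℝ) (ρ₀ : S → ℝ) (π : S → A → ℝ)
    (hP : IsKernel P) (hπ : IsPolicy π) (hρ : IsDist ρ₀) (t : ℕ) (s : S) :
    0 ≤ ∑ s₀, ρ₀ s₀ * visit P π t s₀ s :=
  Finset.sum_nonneg fun s₀ _ => mul_nonneg (hρ.1 s₀) (visit_nonneg' P π hP hπ t s₀ s)

lemma mu_le_one' (P : S → A → S → ℝ) (ρ₀ : S → ℝ) (π : S → A → ℝ)
    (hP : IsKernel P) (hπ : IsPolicy π) (hρ : IsDist ρ₀) (t : ℕ) (s : S) :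
    ∑ s₀, ρ₀ s₀ * visit P π t s₀ s ≤ 1 := by
  calc ∑ s₀, ρ₀ s₀ * visit P π t s₀ s ≤ ∑ s₀, ρ₀ s₀ * 1 :=
        Finset.sum_le_sum fun s₀ _ =>
          mul_le_mul_of_nonneg_left (visit_le_one' P π hP hπ t s₀ s) (hρ.1 s₀)
    _ = 1 := by simp [hρ.2]

lemma dsum_summable (P : S → A → S → ℝ) (γ : ℝ) (ρ₀ : S → ℝ) (π : S → A → ℝ)
    (hP : IsKernel P) (hπ : IsPolicy π) (hρ : IsDist ρ₀) (hγ0 : 0 ≤ γ) (hγ1 : γ < 1) (s : S) :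
    Summable (fun t : ℕ => γ ^ t * ∑ s₀, ρ₀ s₀ * visit P π t s₀ s) := by
  apply Summable.of_nonneg_of_le
    (fun t => mul_nonneg (pow_nonneg hγ0 t) (mu_nonneg' P ρ₀ π hP hπ hρ t s))
    (fun t => ?_) (summable_geometric_of_lt_one hγ0 hγ1)
  calc γ ^ t * ∑ s₀, ρ₀ s₀ * visit P π t s₀ s ≤ γ ^ t * 1 :=
        mul_le_mul_of_nonneg_left (mu_le_one' P ρ₀ π hP hπ hρ t s) (pow_nonneg hγ0 t)
    _ = γ ^ t := mul_one _

lemma dsum_nonneg (P : S → A → S → ℝ) (γ : ℝ) (ρ₀ : S → ℝ) (π : S → A → ℝ)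
    (hP : IsKernel P) (hπ : IsPolicy π) (hρ : IsDist ρ₀) (hγ0 : 0 ≤ γ) (s : S) :
    0 ≤ dsum P γ ρ₀ π s :=
  tsum_nonneg fun t => mul_nonneg (pow_nonneg hγ0 t) (mu_nonneg' P ρ₀ π hP hπ hρ t s)

lemma dsum_rec (P : S → A → S → ℝ) (γ : ℝ) (ρ₀ : S → ℝ) (π : S → A → ℝ)
    (hP : IsKernel P) (hπ : IsPolicy π) (hρ : IsDist ρ₀) (hγ0 : 0 ≤ γ) (hγ1 : γ < 1) (s : S) :
    dsum P γ ρ₀ π s = ρ₀ s + γ * ∑ s'', dsum P γ ρ₀ π s'' * stepKernel P π s'' s := by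
  have hsum := dsum_summable P γ ρ₀ π hP hπ hρ hγ0 hγ1
  unfold dsum
  rw [Summable.tsum_eq_zero_add (hsum s)]
  have h0 : γ ^ 0 * ∑ s₀, ρ₀ s₀ * visit P π 0 s₀ s = ρ₀ s := by
    simp [visit, mul_ite]
  rw [h0]
  congr 1
  have hstep : ∀ t : ℕ, γ ^ (t + 1) * ∑ s₀, ρ₀ s₀ * visit P π (t + 1) s₀ s
      = γ * ∑ s'', (γ ^ t * ∑ s₀, ρ₀ s₀ * visit P π t s₀ s'') * stepKernel P π s'' s := by
    intro t
    have hswap : ∑ s₀, ρ₀ s₀ * visit P π (t + 1) s₀ s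
        = ∑ s'', (∑ s₀, ρ₀ s₀ * visit P π t s₀ s'') * stepKernel P π s'' s := by
      show ∑ s₀, ρ₀ s₀ * ∑ s'', visit P π t s₀ s'' * stepKernel P π s'' s = _
      calc ∑ s₀, ρ₀ s₀ * ∑ s'', visit P π t s₀ s'' * stepKernel P π s'' s
          = ∑ s₀, ∑ s'', ρ₀ s₀ * (visit P π t s₀ s'' * stepKernel P π s'' s) := by
            simp [Finset.mul_sum]
        _ = ∑ s'', ∑ s₀, ρ₀ s₀ * (visit P π t s₀ s'' * stepKernel P π s'' s) :=
            Finset.sum_comm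
        _ = ∑ s'', (∑ s₀, ρ₀ s₀ * visit P π t s₀ s'') * stepKernel P π s'' s := by
            simp only [Finset.sum_mul]
            exact Finset.sum_congr rfl fun s'' _ =>
              Finset.sum_congr rfl fun s₀ _ => by ring
    rw [hswap, Finset.mul_sum, Finset.mul_sum]
    exact Finset.sum_congr rfl fun s'' _ => by ring
  calc ∑' t : ℕ, γ ^ (t + 1) * ∑ s₀, ρ₀ s₀ * visit P π (t + 1) s₀ s
      = ∑' t : ℕ, γ * ∑ s'',
          (γ ^ t * ∑ s₀, ρ₀ s₀ * visit P π t s₀ s'') * stepKernel P π s'' s :=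
        tsum_congr hstep
    _ = γ * ∑' t : ℕ, ∑ s'',
          (γ ^ t * ∑ s₀, ρ₀ s₀ * visit P π t s₀ s'') * stepKernel P π s'' s :=
        tsum_mul_left
    _ = γ * ∑ s'', ∑' t : ℕ,
          (γ ^ t * ∑ s₀, ρ₀ s₀ * visit P π t s₀ s'') * stepKernel P π s'' s := by
        rw [Summable.tsum_finsetSum fun s'' _ => (hsum s'').mul_right _]
    _ = γ * ∑ s'', dsum P γ ρ₀ π s'' * stepKernel P π s'' s := by
        simp only [tsum_mul_right]; rfl

end Helper

/-- **Visitation-shift bound (TRPO/CPO-style).** -/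
theorem visitation_shift_bound {S A : Type*} [Fintype S] [DecidableEq S] [Fintype A]
    (P : S → A → S → ℝ) (γ : ℝ) (ρ₀ : S → ℝ) (π π' : S → A → ℝ)
    (hP : IsKernel P) (hπ : IsPolicy π) (hπ' : IsPolicy π') (hρ : IsDist ρ₀)
    (hγ0 : 0 ≤ γ) (hγ1 : γ < 1) :
    ∑ s, |dvisit P γ ρ₀ π' s - dvisit P γ ρ₀ π s| ≤
      (2 * γ / (1 - γ)) * ∑ s, dvisit P γ ρ₀ π s * dtv (π' s) (π s) := by
  have h1γ : (0:ℝ) < 1 - γ := by linarith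
  set D : S → ℝ := dsum P γ ρ₀ π with hD
  set D' : S → ℝ := dsum P γ ρ₀ π' with hD'
  have hDnn : ∀ s, 0 ≤ D s := fun s => dsum_nonneg P γ ρ₀ π hP hπ hρ hγ0 s
  -- recursion for the difference
  have hrec : ∀ s, D' s - D s =
      γ * ∑ s'', ((D' s'' - D s'') * stepKernel P π' s'' s
        + D s'' * (stepKernel P π' s'' s - stepKernel P π s'' s)) := by
    intro s
    have e1 := dsum_rec P γ ρ₀ π' hP hπ' hρ hγ0 hγ1 s
    have e2 := dsum_rec P γ ρ₀ π hP hπ hρ hγ0 hγ1 s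
    rw [hD', hD, e1, e2]
    have : ∑ s'', ((D' s'' - D s'') * stepKernel P π' s'' s
        + D s'' * (stepKernel P π' s'' s - stepKernel P π s'' s))
        = ∑ s'', (D' s'' * stepKernel P π' s'' s - D s'' * stepKernel P π s'' s) :=
      Finset.sum_congr rfl fun s'' _ => by ring
    rw [this, Finset.sum_sub_distrib]
    ring
  -- total-variation bound on kernel difference
  have hTV : ∀ s'' : S, ∑ s, |stepKernel P π' s'' s - stepKernel P π s'' s|
      ≤ 2 * dtv (π' s'') (π s'') := by
    intro s''
    have : ∀ s, |stepKernel P π' s'' s - stepKernel P π s'' s|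
        ≤ ∑ a, |π' s'' a - π s'' a| * P s'' a s := by
      intro s
      have : stepKernel P π' s'' s - stepKernel P π s'' s
          = ∑ a, (π' s'' a - π s'' a) * P s'' a s := by
        unfold stepKernel
        rw [← Finset.sum_sub_distrib]
        exact Finset.sum_congr rfl fun a _ => by ring
      rw [this]
      refine (Finset.abs_sum_le_sum_abs _ _).trans (le_of_eq ?_)
      exact Finset.sum_congr rfl fun a _ => by
        rw [abs_mul, abs_of_nonneg (hP.1 s'' a s)]
    calc ∑ s, |stepKernel P π' s'' s - stepKernel P π s'' s|
        ≤ ∑ s, ∑ a, |π' s'' a - π s'' a| * P s'' a s :=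
          Finset.sum_le_sum fun s _ => this s
      _ = ∑ a, |π' s'' a - π s'' a| * ∑ s, P s'' a s := by
          rw [Finset.sum_comm]; simp [Finset.mul_sum]
      _ = ∑ a, |π' s'' a - π s'' a| := by simp [hP.2]
      _ = 2 * dtv (π' s'') (π s'') := by unfold dtv; ring
  -- key contraction inequality
  have key : ∑ s, |D' s - D s| ≤
      γ * ∑ s, |D' s - D s| + γ * ∑ s'', D s'' * (2 * dtv (π' s'') (π s'')) := by
    calc ∑ s, |D' s - D s|
        ≤ ∑ s, γ * ∑ s'', (|D' s'' - D s''| * stepKernel P π' s'' s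
            + D s'' * |stepKernel P π' s'' s - stepKernel P π s'' s|) := by
          refine Finset.sum_le_sum fun s _ => ?_
          rw [hrec s, abs_mul, abs_of_nonneg hγ0]
          refine mul_le_mul_of_nonneg_left ?_ hγ0
          refine (Finset.abs_sum_le_sum_abs _ _).trans ?_
          refine Finset.sum_le_sum fun s'' _ => ?_
          refine (abs_add_le _ _).trans ?_
          gcongr
          · rw [abs_mul, abs_of_nonneg (stepKernel_nonneg' P π' hP hπ' s'' s)]
          · rw [abs_mul, abs_of_nonneg (hDnn s'')]
      _ = γ * ∑ s'', (|D' s'' - D s''| * ∑ s, stepKernel P π' s'' s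
            + D s'' * ∑ s, |stepKernel P π' s'' s - stepKernel P π s'' s|) := by
          rw [← Finset.mul_sum, Finset.sum_comm]
          congr 1
          refine Finset.sum_congr rfl fun s'' _ => ?_
          rw [Finset.sum_add_distrib, Finset.mul_sum, Finset.mul_sum]
      _ ≤ γ * ∑ s'', (|D' s'' - D s''| * 1 + D s'' * (2 * dtv (π' s'') (π s''))) := by
          refine mul_le_mul_of_nonneg_left (Finset.sum_le_sum fun s'' _ => ?_) hγ0
          rw [stepKernel_sum' P π' hP hπ' s'']
          exact add_le_add le_rfl (mul_le_mul_of_nonneg_left (hTV s'') (hDnn s''))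
      _ = γ * ∑ s, |D' s - D s| + γ * ∑ s'', D s'' * (2 * dtv (π' s'') (π s'')) := by
          rw [Finset.sum_add_distrib, mul_add]
          simp
  -- convert goal to D form
  have hgoalL : ∑ s, |dvisit P γ ρ₀ π' s - dvisit P γ ρ₀ π s|
      = (1 - γ) * ∑ s, |D' s - D s| := by
    rw [Finset.mul_sum]
    refine Finset.sum_congr rfl fun s _ => ?_
    rw [dvisit_eq_dsum, dvisit_eq_dsum, ← mul_sub, abs_mul, abs_of_pos h1γ, ← hD, ← hD']
  have hgoalR : (2 * γ / (1 - γ)) * ∑ s, dvisit P γ ρ₀ π s * dtv (π' s) (π s)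
      = 2 * γ * ∑ s, D s * dtv (π' s) (π s) := by
    have : ∑ s, dvisit P γ ρ₀ π s * dtv (π' s) (π s)
        = (1 - γ) * ∑ s, D s * dtv (π' s) (π s) := by
      rw [Finset.mul_sum]
      refine Finset.sum_congr rfl fun s _ => ?_
      rw [dvisit_eq_dsum, ← hD]; ring
    rw [this]
    field_simp
  rw [hgoalL, hgoalR]
  have key2 : γ * ∑ s'', D s'' * (2 * dtv (π' s'') (π s''))
      = 2 * γ * ∑ s, D s * dtv (π' s) (π s) := by
    rw [Finset.mul_sum, Finset.mul_sum]
    exact Finset.sum_congr rfl fun s _ => by ring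
  nlinarith [key, key2]
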